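/- Let (W, 𝓗, μ) be an abstract Wiener space, i.e., 𝓗 is a separable Hilbert space continuously embedded in the Banach space W. Then for each m ≥ 1 there are bounded inclusions L^{(m)}(W, …, W; ℝ) ↪ L^{(m)}(W, …, W, 𝓗; ℝ) ↪ (𝓗*)^{⊗m}, where the last space carries the Hilbert–Schmidt norm. In particular, any bounded m-multilinear form on W restricts to a Hilbert–Schmidt m-multilinear form on 𝓗. -/

import Mathlib

open MeasureTheory
open scoped ENNReal

section KuoAux

variable {W : Type*} [NormedAddCommGroup W] [NormedSpace ℝ W] [MeasurableSpace W]
  {𝓗 : Type*} [NormedAddCommGroup 𝓗] [InnerProductSpace ℝ 𝓗]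

/-- Base case: for `φ ∈ W*`, the sum of `φ(j e_a)²` equals `∫ φ²`. -/
private lemma kuo_base (j : 𝓗 →L[ℝ] W) (μ : Measure W)
    (hgauss : ∀ φ : W →L[ℝ] ℝ, ∃ hφ : 𝓗,
      (∀ k : 𝓗, (inner ℝ hφ k : ℝ) = φ (j k)) ∧ ∫ w, (φ w) ^ 2 ∂μ = ‖hφ‖ ^ 2)
    {ι : Type*} (e : HilbertBasis ι ℝ 𝓗) (φ : W →L[ℝ] ℝ) :
    HasSum (fun a : ι => (φ (j (e a))) ^ 2) (∫ w, (φ w) ^ 2 ∂μ) := by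
  obtain ⟨h, hrep, hint⟩ := hgauss φ
  have H : HasSum (fun a : ι => (inner ℝ h (e a) : ℝ) * (inner ℝ (e a) h : ℝ))
      ((inner ℝ h h : ℝ)) := e.hasSum_inner_mul_inner h h
  have hfe : (fun a : ι => (φ (j (e a))) ^ 2)
      = fun a : ι => (inner ℝ h (e a) : ℝ) * (inner ℝ (e a) h : ℝ) := by
    funext a
    have h1 : (inner ℝ h (e a) : ℝ) = φ (j (e a)) := hrep (e a)
    have h2 : (inner ℝ (e a) h : ℝ) = inner ℝ h (e a) := real_inner_comm _ _
    rw [h2, h1]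
    ring
  rw [hint, hfe, ← real_inner_self_eq_norm_sq h]
  exact H

/-- The second moment bound on `∫ φ²`. -/
private lemma kuo_int_le (μ : Measure W) (hmom : Integrable (fun w => ‖w‖ ^ 2) μ)
    (φ : W →L[ℝ] ℝ) :
    ∫ w, (φ w) ^ 2 ∂μ ≤ ‖φ‖ ^ 2 * ∫ w, ‖w‖ ^ 2 ∂μ := by
  by_cases hi : Integrable (fun w => (φ w) ^ 2) μ
  · rw [← integral_const_mul]
    refine integral_mono hi (hmom.const_mul _) fun w => ?_
    have h1 : |φ w| ≤ ‖φ‖ * ‖w‖ := by simpa using φ.le_opNorm w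
    nlinarith [abs_nonneg (φ w), sq_abs (φ w), norm_nonneg w, norm_nonneg φ]
  · rw [integral_undef hi]
    have h0 : (0 : ℝ) ≤ ∫ w, ‖w‖ ^ 2 ∂μ := integral_nonneg fun w => sq_nonneg _
    positivity

/-- Main induction: Hilbert–Schmidt bound for `m`-multilinear forms. -/
private lemma kuo_main (j : 𝓗 →L[ℝ] W) (μ : Measure W) [IsProbabilityMeasure μ]
    (hmom : Integrable (fun w => ‖w‖ ^ 2) μ)
    (hgauss : ∀ φ : W →L[ℝ] ℝ, ∃ hφ : 𝓗,
      (∀ k : 𝓗, (inner ℝ hφ k : ℝ) = φ (j k)) ∧ ∫ w, (φ w) ^ 2 ∂μ = ‖hφ‖ ^ 2)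
    {ι : Type*} (e : HilbertBasis ι ℝ 𝓗) (m : ℕ) :
    ∀ T : ContinuousMultilinearMap ℝ (fun _ : Fin m => W) ℝ,
      Summable (fun i : Fin m → ι => (T (fun k => j (e (i k)))) ^ 2) ∧
      (∑' i : Fin m → ι, (T (fun k => j (e (i k)))) ^ 2)
        ≤ (∫ w, ‖w‖ ^ 2 ∂μ) ^ m * ‖T‖ ^ 2 := by
  induction m with
  | zero =>
    intro T
    have hs : HasSum (fun i : Fin 0 → ι => (T (fun k => j (e (i k)))) ^ 2)
        ((T (fun k => j (e ((default : Fin 0 → ι) k)))) ^ 2) :=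
      hasSum_single default fun b hb => absurd (Unique.eq_default b) hb
    refine ⟨hs.summable, ?_⟩
    rw [hs.tsum_eq, pow_zero, one_mul]
    have h1 := T.le_opNorm (fun k => j (e ((default : Fin 0 → ι) k)))
    simp only [Finset.univ_eq_empty, Finset.prod_empty, mul_one, Real.norm_eq_abs] at h1
    calc (T (fun k => j (e ((default : Fin 0 → ι) k)))) ^ 2
        = |T (fun k => j (e ((default : Fin 0 → ι) k)))| ^ 2 := (sq_abs _).symm
      _ ≤ ‖T‖ ^ 2 := pow_le_pow_left₀ (abs_nonneg _) h1 2
  | succ m IH =>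
    intro T
    set M := ∫ w, ‖w‖ ^ 2 ∂μ with hMdef
    have hM0 : 0 ≤ M := integral_nonneg fun w => sq_nonneg _
    set L : W →L[ℝ] ContinuousMultilinearMap ℝ (fun _ : Fin m => W) ℝ :=
      T.curryLeft with hLdef
    have hLnorm : ∀ w : W, ‖L w‖ ≤ ‖T‖ * ‖w‖ := by
      intro w
      calc ‖L w‖ ≤ ‖L‖ * ‖w‖ := L.le_opNorm w
        _ = ‖T‖ * ‖w‖ := by rw [hLdef, T.curryLeft_norm]
    set v : (Fin m → ι) → (Fin m → W) := fun t k => j (e (t k)) with hv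
    set φ : (Fin m → ι) → (W →L[ℝ] ℝ) := fun t =>
      (ContinuousMultilinearMap.apply ℝ (fun _ : Fin m => W) ℝ (v t)).comp L with hφdef
    have hφ : ∀ (t : Fin m → ι) (w : W), φ t w = (L w) (v t) := fun t w => rfl
    have hbase : ∀ t, HasSum (fun a : ι => (φ t (j (e a))) ^ 2) (∫ w, (φ t w) ^ 2 ∂μ) :=
      fun t => kuo_base j μ hgauss e (φ t)
    set A : (Fin m → ι) → ℝ := fun t => ∫ w, (φ t w) ^ 2 ∂μ with hA
    have hA0 : ∀ t, 0 ≤ A t := fun t => integral_nonneg fun w => sq_nonneg _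
    -- key finite-sum bound
    have key : ∀ F : Finset (Fin m → ι), ∑ t ∈ F, A t ≤ M ^ (m + 1) * ‖T‖ ^ 2 := by
      intro F
      classical
      set F' := F.filter (fun t => Integrable (fun w => (φ t w) ^ 2) μ) with hF'
      have hint : ∀ t ∈ F', Integrable (fun w => (φ t w) ^ 2) μ :=
        fun t ht => (Finset.mem_filter.mp ht).2
      have hsub : ∑ t ∈ F, A t = ∑ t ∈ F', A t := by
        refine (Finset.sum_subset (Finset.filter_subset _ _) fun t htF htF' => ?_).symm
        have hni : ¬ Integrable (fun w => (φ t w) ^ 2) μ := fun h =>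
          htF' (Finset.mem_filter.mpr ⟨htF, h⟩)
        simpa only [hA] using integral_undef hni
      have hswap : ∑ t ∈ F', A t = ∫ w, ∑ t ∈ F', (φ t w) ^ 2 ∂μ :=
        (integral_finset_sum F' hint).symm
      have hpt : ∀ w : W, ∑ t ∈ F', (φ t w) ^ 2 ≤ (M ^ m * ‖T‖ ^ 2) * ‖w‖ ^ 2 := by
        intro w
        obtain ⟨hS, hB⟩ := IH (L w)
        have h1 : ∑ t ∈ F', (φ t w) ^ 2
            ≤ ∑' t : Fin m → ι, ((L w) (fun k => j (e (t k)))) ^ 2 := by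
          refine Summable.sum_le_tsum F' (fun t _ => sq_nonneg _) hS
        have h3 : M ^ m * ‖L w‖ ^ 2 ≤ M ^ m * (‖T‖ * ‖w‖) ^ 2 := by
          refine mul_le_mul_of_nonneg_left ?_ (pow_nonneg hM0 m)
          exact pow_le_pow_left₀ (norm_nonneg _) (hLnorm w) 2
        calc ∑ t ∈ F', (φ t w) ^ 2
            ≤ ∑' t : Fin m → ι, ((L w) (fun k => j (e (t k)))) ^ 2 := h1
          _ ≤ M ^ m * ‖L w‖ ^ 2 := hB
          _ ≤ M ^ m * (‖T‖ * ‖w‖) ^ 2 := h3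
          _ = (M ^ m * ‖T‖ ^ 2) * ‖w‖ ^ 2 := by ring
      calc ∑ t ∈ F, A t = ∫ w, ∑ t ∈ F', (φ t w) ^ 2 ∂μ := by rw [hsub, hswap]
        _ ≤ ∫ w, (M ^ m * ‖T‖ ^ 2) * ‖w‖ ^ 2 ∂μ :=
            integral_mono (integrable_finset_sum F' hint) (hmom.const_mul _) hpt
        _ = (M ^ m * ‖T‖ ^ 2) * M := by rw [integral_const_mul]
        _ = M ^ (m + 1) * ‖T‖ ^ 2 := by ring
    have hAsum : Summable A := summable_of_sum_le (fun t => hA0 t) key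
    -- the product function
    set f : (Fin m → ι) × ι → ℝ :=
      fun p => (T (fun k => j (e ((Fin.cons p.2 p.1 : Fin (m + 1) → ι) k)))) ^ 2 with hf
    have hfiber : ∀ t : Fin m → ι, HasSum (fun a : ι => f (t, a)) (A t) := by
      intro t
      have hc : (fun a : ι => f (t, a)) = fun a : ι => (φ t (j (e a))) ^ 2 := by
        funext a
        have hvv : (fun k => j (e ((Fin.cons a t : Fin (m + 1) → ι) k))) = Fin.cons (j (e a)) (v t) := by
          funext k
          induction k using Fin.cases with
          | zero => simp
          | succ k' => simp [hv]
        show (T (fun k => j (e ((Fin.cons a t : Fin (m + 1) → ι) k)))) ^ 2 = (φ t (j (e a))) ^ 2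
        rw [hvv, hφ, hLdef, ContinuousMultilinearMap.curryLeft_apply]
      rw [hc]
      exact hbase t
    have hfnn : (0 : (Fin m → ι) × ι → ℝ) ≤ f := fun p => sq_nonneg _
    have hAeq : (fun t : Fin m → ι => ∑' a : ι, f (t, a)) = A :=
      funext fun t => (hfiber t).tsum_eq
    have hfsummable : Summable f :=
      (summable_prod_of_nonneg hfnn).mpr
        ⟨fun t => (hfiber t).summable, by rw [hAeq]; exact hAsum⟩
    have htsum_f : ∑' p : (Fin m → ι) × ι, f p ≤ M ^ (m + 1) * ‖T‖ ^ 2 := by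
      rw [Summable.tsum_prod' hfsummable fun t => (hfiber t).summable]
      calc (∑' t : Fin m → ι, ∑' a : ι, f (t, a))
          = ∑' t : Fin m → ι, A t := tsum_congr fun t => (hfiber t).tsum_eq
        _ ≤ M ^ (m + 1) * ‖T‖ ^ 2 := Summable.tsum_le_of_sum_le hAsum key
    -- transfer along the equivalence
    let σ : (Fin m → ι) × ι ≃ (Fin (m + 1) → ι) :=
      { toFun := fun p => Fin.cons p.2 p.1
        invFun := fun i => (fun k => i k.succ, i 0)
        left_inv := by
          intro p
          refine Prod.ext ?_ ?_ <;> simp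
        right_inv := by
          intro i
          funext k
          induction k using Fin.cases with
          | zero => simp
          | succ k' => simp }
    have hgf : f = (fun i : Fin (m + 1) → ι => (T (fun k => j (e (i k)))) ^ 2) ∘ σ := rfl
    have hgsummable : Summable (fun i : Fin (m + 1) → ι => (T (fun k => j (e (i k)))) ^ 2) :=
      σ.summable_iff.mp (hgf ▸ hfsummable)
    refine ⟨hgsummable, ?_⟩
    have htr : ∑' p : (Fin m → ι) × ι, f p
        = ∑' i : Fin (m + 1) → ι, (T (fun k => j (e (i k)))) ^ 2 := by
      rw [hgf]
      exact σ.tsum_eq (fun i : Fin (m + 1) → ι => (T (fun k => j (e (i k)))) ^ 2)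
    rw [← htr]
    exact htsum_f

end KuoAux

/-- Kuo's theorem for an abstract Wiener space `(W, 𝓗, μ)`: every bounded `m`-multilinear
form on `W` restricts, along the embedding `j : 𝓗 ↪ W`, to a Hilbert–Schmidt `m`-multilinear
form on `𝓗`, and the inclusion is bounded.  The Wiener-space structure is encoded by a
probability measure `μ` on `W` with finite second moment such that every `φ ∈ W*` is
represented on `𝓗` (via `j`) by an element `h_φ ∈ 𝓗` with `∫ φ(w)² dμ = ‖h_φ‖²`. -/
theorem multilinear_form_restricts_hilbertSchmidt
    {W : Type*} [NormedAddCommGroup W] [NormedSpace ℝ W] [MeasurableSpace W]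
    {𝓗 : Type*} [NormedAddCommGroup 𝓗] [InnerProductSpace ℝ 𝓗]
    (j : 𝓗 →L[ℝ] W) (hj : Function.Injective j)
    (μ : Measure W) [IsProbabilityMeasure μ]
    (hmom : Integrable (fun w => ‖w‖ ^ 2) μ)
    (hgauss : ∀ φ : W →L[ℝ] ℝ, ∃ hφ : 𝓗,
      (∀ k : 𝓗, (inner ℝ hφ k : ℝ) = φ (j k)) ∧ ∫ w, (φ w) ^ 2 ∂μ = ‖hφ‖ ^ 2)
    (m : ℕ) (hm : 1 ≤ m)
    {ι : Type*} (e : HilbertBasis ι ℝ 𝓗) :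
    ∃ C : ℝ, 0 ≤ C ∧
      ∀ T : ContinuousMultilinearMap ℝ (fun _ : Fin m => W) ℝ,
        Summable (fun i : Fin m → ι => (T (fun k => j (e (i k)))) ^ 2) ∧
        (∑' i : Fin m → ι, (T (fun k => j (e (i k)))) ^ 2) ≤ C * ‖T‖ ^ 2 := by
  refine ⟨(∫ w, ‖w‖ ^ 2 ∂μ) ^ m,
    pow_nonneg (integral_nonneg fun w => sq_nonneg _) m, fun T => ?_⟩
  exact kuo_main j μ hmom hgauss e m T
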